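/- Let c be a circular order on a group H and let F be a finite subset of H. Then (a) there exists an injection ι : F → S¹ such that for all pairwise distinct g₁, g₂, g₃ ∈ F, c(g₁,g₂,g₃) = 1 if and only if sbtw(ι g₁, ι g₂, ι g₃); and (b) for any two injections ι, ι' : F → S¹ with this property there is an orientation-preserving homeomorphism h of S¹ such that ι' = h ∘ ι. That is, a circular order of H determines the configuration of any finite subset of H. -/

import Mathlib

/-- A circular order on a group `H`: a function `c : H³ → {-1,0,1} ⊆ ℤ` satisfying
the vanishing, cocycle and left-invariance conditions. -/
def IsCircularOrder {H : Type*} [Group H] (c : H → H → H → ℤ) : Prop :=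
  (∀ g₁ g₂ g₃ : H, c g₁ g₂ g₃ = -1 ∨ c g₁ g₂ g₃ = 0 ∨ c g₁ g₂ g₃ = 1) ∧
  (∀ g₁ g₂ g₃ : H, c g₁ g₂ g₃ = 0 ↔ g₁ = g₂ ∨ g₁ = g₃ ∨ g₂ = g₃) ∧
  (∀ g₁ g₂ g₃ g₄ : H, c g₂ g₃ g₄ - c g₁ g₃ g₄ + c g₁ g₂ g₄ - c g₁ g₂ g₃ = 0) ∧
  (∀ h g₁ g₂ g₃ : H, c (h * g₁) (h * g₂) (h * g₃) = c g₁ g₂ g₃)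

/-- The circle `ℝ/ℤ`. -/
abbrev S1 := UnitAddCircle

/-- A homeomorphism of the circle is orientation preserving if it preserves the
strict cyclic betweenness relation. -/
def OrientationPreserving (h : S1 ≃ₜ S1) : Prop :=
  ∀ x y z : S1, sbtw x y z → sbtw (h x) (h y) (h z)

/-- An injection `ι` of a finite subset `F` of `H` into the circle realizes the
circular order `c` if cyclic order of triples of distinct points matches `c`. -/
def RealizesOrder {H : Type*} [Group H] (c : H → H → H → ℤ) (F : Finset H)
    (ι : F → S1) : Prop :=
  ∀ g₁ g₂ g₃ : F, g₁ ≠ g₂ → g₁ ≠ g₃ → g₂ ≠ g₃ →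
    (c g₁ g₂ g₃ = 1 ↔ sbtw (ι g₁) (ι g₂) (ι g₃))



lemma btw_coe_iff1 {x y z : ℝ} :
    Btw.btw (x : S1) y z ↔ toIcoMod one_pos x y ≤ toIocMod one_pos x z :=
  QuotientAddGroup.btw_coe_iff

lemma sbtw_of_lt {x y z : ℝ} (h1 : x < y) (h2 : y < z) (h3 : z < x + 1) :
    sbtw (x : S1) (y : S1) (z : S1) := by
  rw [sbtw_iff_btw_not_btw]
  constructor
  · rw [btw_coe_iff1, (toIcoMod_eq_self _).2 ⟨h1.le, h2.trans h3⟩,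
      (toIocMod_eq_self _).2 ⟨h1.trans h2, h3.le⟩]
    exact h2.le
  · rw [btw_cyclic, btw_coe_iff1, not_le,
      (toIcoMod_eq_self _).2 ⟨h1.le.trans h2.le, h3⟩,
      (toIocMod_eq_self _).2 ⟨h1, by linarith⟩]
    exact h2

lemma not_sbtw_of_sbtw_rev {x y z : S1} (h : sbtw x y z) : ¬ sbtw x z y := fun h' =>
  (sbtw_iff_btw_not_btw.1 h).2 (btw_cyclic_left (sbtw_iff_btw_not_btw.1 h').1)

lemma sbtw_ne12 {x y z : S1} (h : sbtw x y z) : x ≠ y := by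
  rintro rfl; exact (sbtw_iff_btw_not_btw.1 h).2 btw_rfl_right
lemma sbtw_ne13 {x y z : S1} (h : sbtw x y z) : x ≠ z := by
  rintro rfl; exact (sbtw_iff_btw_not_btw.1 h).2 (btw_cyclic_left btw_rfl_left)
lemma sbtw_ne23 {x y z : S1} (h : sbtw x y z) : y ≠ z := by
  rintro rfl; exact (sbtw_iff_btw_not_btw.1 h).2 btw_rfl_left

lemma coe_toIocMod_eq (u y : ℝ) : ((toIocMod one_pos u y : ℝ) : S1) = (y : S1) := by
  have h := self_sub_toIocMod one_pos u y
  have : y - toIocMod one_pos u y ∈ AddSubgroup.zmultiples (1:ℝ) := by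
    rw [h]; exact AddSubgroup.zsmul_mem_zmultiples _ _
  exact (QuotientAddGroup.eq_iff_sub_mem.2 (by simpa using neg_mem this))

lemma sbtw_iff_reps {u v w : ℝ} (hv : v ∈ Set.Ioo u (u+1)) (hw : w ∈ Set.Ioo u (u+1))
    (hvw : v ≠ w) : sbtw (u : S1) (v : S1) (w : S1) ↔ v < w := by
  constructor
  · intro h
    rcases hvw.lt_or_gt with h'|h'
    · exact h'
    · exact absurd h (not_sbtw_of_sbtw_rev (sbtw_of_lt hw.1 h' hv.2))
  · intro h; exact sbtw_of_lt hv.1 h hw.2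

/-- every point distinct from ↑u has a representative in the open window -/
lemma exists_rep_Ioo (u : ℝ) (y : S1) (hy : y ≠ (u : S1)) :
    ∃ v : ℝ, v ∈ Set.Ioo u (u+1) ∧ (v : S1) = y := by
  induction y using QuotientAddGroup.induction_on with | H y₀ =>
  refine ⟨toIocMod one_pos u y₀, ⟨(toIocMod_mem_Ioc one_pos u y₀).1, ?_⟩, coe_toIocMod_eq u y₀⟩
  rcases lt_or_eq_of_le (toIocMod_mem_Ioc one_pos u y₀).2 with h|h
  · exact h
  · exfalso
    apply hy
    rw [← coe_toIocMod_eq u y₀, h]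
    have : ((u:ℝ) : S1) + ((1:ℝ) : S1) = ((u + 1 : ℝ) : S1) := rfl
    rw [← this]
    simp

lemma btw_add_left (t x y z : S1) : btw (t+x) (t+y) (t+z) ↔ btw x y z := by
  induction t using QuotientAddGroup.induction_on with | H t =>
  induction x using QuotientAddGroup.induction_on with | H x =>
  induction y using QuotientAddGroup.induction_on with | H y =>
  induction z using QuotientAddGroup.induction_on with | H z =>
  have e : ∀ a b : ℝ, ((a:S1) + (b:S1)) = ((a+b : ℝ) : S1) := fun a b => rfl
  rw [e, e, e]
  rw [show (Btw.btw ((t+x:ℝ):S1) ((t+y:ℝ):S1) ((t+z:ℝ):S1)) ↔ _ from QuotientAddGroup.btw_coe_iff',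
      show (Btw.btw ((x:ℝ):S1) ((y:ℝ):S1) ((z:ℝ):S1)) ↔ _ from QuotientAddGroup.btw_coe_iff']
  have h1 : t + y - (t + x) = y - x := by ring
  have h2 : t + z - (t + x) = z - x := by ring
  rw [h1, h2]

lemma sbtw_add_left (t x y z : S1) : sbtw (t+x) (t+y) (t+z) ↔ sbtw x y z := by
  simp only [sbtw_iff_btw_not_btw, btw_add_left]

section Construct

lemma f_add_int {f : ℝ → ℝ} (hper : ∀ t, f (t + 1) = f t + 1) (k : ℤ) (t : ℝ) :
    f (t + k) = f t + k := by
  induction k using Int.induction_on with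
  | zero => simp
  | succ n ih => push_cast at ih ⊢; rw [show t + ((n:ℝ)+1) = (t + n) + 1 by ring, hper, ih]; ring
  | pred n ih =>
    push_cast at ih ⊢
    have := hper (t + -((n:ℝ)+1))
    rw [show t + -((n:ℝ)+1) + 1 = t + -(n:ℝ) by ring, ih] at this
    rw [show t + (-(n:ℝ) - 1) = t + -((n:ℝ)+1) by ring]
    linarith

lemma f_surj {f : ℝ → ℝ} (hmono : StrictMono f) (hcont : Continuous f)
    (hper : ∀ t, f (t + 1) = f t + 1) : Function.Surjective f := by
  have hub : ∀ t : ℝ, f t ≤ f 0 + t + 1 := by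
    intro t
    have h1 : f t ≤ f (0 + ((⌊t⌋:ℤ) + 1 : ℤ)) := hmono.monotone (by
      have := Int.lt_floor_add_one t; push_cast; linarith)
    have h2 : f ((0:ℝ) + ((⌊t⌋:ℤ)+1 : ℤ)) = f 0 + ((⌊t⌋:ℤ)+1 : ℤ) := f_add_int hper _ _
    rw [h2] at h1
    have := Int.floor_le t; push_cast at h1; linarith
  have hlb : ∀ t : ℝ, f 0 + t - 1 ≤ f t := by
    intro t
    have h1 : f ((0:ℝ) + (⌊t⌋ : ℤ)) ≤ f t := hmono.monotone (by
      have := Int.floor_le t; simp; linarith)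
    have h2 : f ((0:ℝ) + (⌊t⌋ : ℤ)) = f 0 + ⌊t⌋ := f_add_int hper _ _
    rw [h2] at h1
    have := Int.lt_floor_add_one t; linarith
  apply hcont.surjective
  · apply Filter.tendsto_atTop_mono hlb
    apply Filter.tendsto_atTop_add_const_right
    exact Filter.tendsto_atTop_add_const_left _ _ Filter.tendsto_id
  · apply Filter.tendsto_atBot_mono hub
    apply Filter.tendsto_atBot_add_const_right
    exact Filter.tendsto_atBot_add_const_left _ _ Filter.tendsto_id

noncomputable def fIso {f : ℝ → ℝ} (hmono : StrictMono f) (hcont : Continuous f)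
    (hper : ∀ t, f (t + 1) = f t + 1) : ℝ ≃o ℝ :=
  StrictMono.orderIsoOfSurjective f hmono (f_surj hmono hcont hper)

lemma fIso_symm_per {f : ℝ → ℝ} (hmono : StrictMono f) (hcont : Continuous f)
    (hper : ∀ t, f (t + 1) = f t + 1) (s : ℝ) :
    (fIso hmono hcont hper).symm (s + 1) = (fIso hmono hcont hper).symm s + 1 := by
  apply hmono.injective
  have h1 : f ((fIso hmono hcont hper).symm (s+1)) = s + 1 :=
    (fIso hmono hcont hper).apply_symm_apply (s+1)
  have h2 : f ((fIso hmono hcont hper).symm s) = s :=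
    (fIso hmono hcont hper).apply_symm_apply s
  rw [h1, hper, h2]

/-- descend a ℝ-map commuting with +1 to the circle -/
noncomputable def descend (g : ℝ → ℝ) (hg : ∀ k : ℤ, ∀ t, g (t + k) = g t + k) : S1 → S1 :=
  Quotient.map' g (by
    intro a b hab
    rw [QuotientAddGroup.leftRel_apply] at hab ⊢
    obtain ⟨k, hk⟩ := hab
    refine ⟨k, ?_⟩
    simp only [zsmul_eq_mul, mul_one] at hk ⊢
    have : b = a + k := by linarith
    rw [this, hg k a]; ring)

lemma descend_apply (g : ℝ → ℝ) (hg) (t : ℝ) : descend g hg (t : S1) = ((g t : ℝ) : S1) := rfl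

lemma descend_continuous (g : ℝ → ℝ) (hg) (h : Continuous g) : Continuous (descend g hg) :=
  Continuous.quotient_map' (by exact h) _

lemma fIso_symm_add_int {f : ℝ → ℝ} (hmono : StrictMono f) (hcont : Continuous f)
    (hper : ∀ t, f (t + 1) = f t + 1) (k : ℤ) (t : ℝ) :
    (fIso hmono hcont hper).symm (t + k) = (fIso hmono hcont hper).symm t + k := by
  induction k using Int.induction_on with
  | zero => simp
  | succ n ih => push_cast at ih ⊢; rw [show t + ((n:ℝ)+1) = (t + n) + 1 by ring,
      fIso_symm_per hmono hcont hper, ih]; ring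
  | pred n ih =>
    push_cast at ih ⊢
    have := fIso_symm_per hmono hcont hper (t + -((n:ℝ)+1))
    rw [show t + -((n:ℝ)+1) + 1 = t + -(n:ℝ) by ring, ih] at this
    rw [show t + (-(n:ℝ) - 1) = t + -((n:ℝ)+1) by ring]
    linarith

noncomputable def circleHomeo {f : ℝ → ℝ} (hmono : StrictMono f) (hcont : Continuous f)
    (hper : ∀ t, f (t + 1) = f t + 1) : S1 ≃ₜ S1 where
  toFun := descend f (f_add_int hper)
  invFun := descend (fIso hmono hcont hper).symm (fIso_symm_add_int hmono hcont hper)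
  left_inv := by
    intro x
    induction x using QuotientAddGroup.induction_on with | H t =>
    rw [descend_apply, descend_apply]
    congr 1
    exact (fIso hmono hcont hper).symm_apply_apply t
  right_inv := by
    intro x
    induction x using QuotientAddGroup.induction_on with | H t =>
    rw [descend_apply, descend_apply]
    congr 1
    exact (fIso hmono hcont hper).apply_symm_apply t
  continuous_toFun := descend_continuous f (f_add_int hper) hcont
  continuous_invFun := descend_continuous (fIso hmono hcont hper).symm
    (fIso_symm_add_int hmono hcont hper)
    ((fIso hmono hcont hper).toHomeomorph.continuous_invFun)

lemma circleHomeo_apply {f : ℝ → ℝ} (hmono : StrictMono f) (hcont : Continuous f)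
    (hper : ∀ t, f (t + 1) = f t + 1) (t : ℝ) :
    circleHomeo hmono hcont hper (t : S1) = ((f t : ℝ) : S1) :=
  descend_apply f (f_add_int hper) t

lemma circleHomeo_op {f : ℝ → ℝ} (hmono : StrictMono f) (hcont : Continuous f)
    (hper : ∀ t, f (t + 1) = f t + 1) : ∀ x y z : S1, sbtw x y z →
    sbtw (circleHomeo hmono hcont hper x) (circleHomeo hmono hcont hper y)
      (circleHomeo hmono hcont hper z) := by
  intro x y z h
  induction x using QuotientAddGroup.induction_on with | H u =>
  obtain ⟨v, hv, rfl⟩ := exists_rep_Ioo u y (sbtw_ne12 h).symm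
  obtain ⟨w, hw, rfl⟩ := exists_rep_Ioo u z (sbtw_ne13 h).symm
  have hvw : v ≠ w := by rintro rfl; exact (sbtw_ne23 h) rfl
  have hlt : v < w := (sbtw_iff_reps hv hw hvw).1 h
  rw [circleHomeo_apply, circleHomeo_apply, circleHomeo_apply]
  refine sbtw_of_lt (hmono hv.1) (hmono hlt) ?_
  have : f w < f (u + 1) := hmono hw.2
  rwa [hper] at this

end Construct

section Interp

noncomputable def clamp (u : ℝ) : ℝ := max 0 (min u 1)

lemma clamp_mono : Monotone clamp := fun a b h =>
  max_le_max le_rfl (min_le_min h le_rfl)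

lemma clamp_cont : Continuous clamp :=
  continuous_const.max (continuous_id.min continuous_const)

lemma clamp_of_nonpos {u : ℝ} (h : u ≤ 0) : clamp u = 0 :=
  max_eq_left (le_trans (min_le_left _ _) h)

lemma clamp_of_one_le {u : ℝ} (h : 1 ≤ u) : clamp u = 1 := by
  rw [clamp, min_eq_right h, max_eq_right zero_le_one]

lemma clamp_of_mem {u : ℝ} (h0 : 0 ≤ u) (h1 : u ≤ 1) : clamp u = u := by
  rw [clamp, min_eq_left h1, max_eq_right h0]

lemma exists_interp (n : ℕ) (hn : 0 < n) (x y : Fin n → ℝ)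
    (hx : StrictMono x) (hy : StrictMono y)
    (hx0 : x ⟨0, hn⟩ = 0) (hy0 : y ⟨0, hn⟩ = 0)
    (hx1 : ∀ i, x i < 1) (hy1 : ∀ i, y i < 1) :
    ∃ f : ℝ → ℝ, StrictMono f ∧ Continuous f ∧ (∀ t, f (t + 1) = f t + 1) ∧
      ∀ i, f (x i) = y i := by
  classical
  set X : ℕ → ℝ := fun i => if h : i < n then x ⟨i, h⟩ else 1 with hX
  set Y : ℕ → ℝ := fun i => if h : i < n then y ⟨i, h⟩ else 1 with hY
  have hX0 : X 0 = 0 := by simp [hX, hn, hx0]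
  have hY0 : Y 0 = 0 := by simp [hY, hn, hy0]
  have hXn : X n = 1 := by simp [hX]
  have hYn : Y n = 1 := by simp [hY]
  have Xmono : ∀ i j : ℕ, i < j → j ≤ n → X i < X j := by
    intro i j hij hjn
    have hi : i < n := lt_of_lt_of_le hij hjn
    by_cases h : j < n
    · simp only [hX, dif_pos hi, dif_pos h]
      exact hx hij
    · simp only [hX, dif_pos hi, dif_neg h]
      exact hx1 _
  have Ymono : ∀ i j : ℕ, i < j → j ≤ n → Y i < Y j := by
    intro i j hij hjn
    have hi : i < n := lt_of_lt_of_le hij hjn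
    by_cases h : j < n
    · simp only [hY, dif_pos hi, dif_pos h]
      exact hy hij
    · simp only [hY, dif_pos hi, dif_neg h]
      exact hy1 _
  have Xmono' : ∀ i j : ℕ, i ≤ j → j ≤ n → X i ≤ X j := by
    intro i j hij hjn
    rcases eq_or_lt_of_le hij with rfl|h
    · exact le_rfl
    · exact (Xmono i j h hjn).le
  have Xnonneg : ∀ i : ℕ, i ≤ n → 0 ≤ X i := by
    intro i hi
    rw [← hX0]; exact Xmono' 0 i (Nat.zero_le _) hi
  have dpos : ∀ i : ℕ, i < n → 0 < X (i+1) - X i :=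
    fun i hi => sub_pos.2 (Xmono i (i+1) (Nat.lt_succ_self _) hi)
  set T : ℕ → ℝ → ℝ := fun i s => (Y (i+1) - Y i) * clamp ((s - X i) / (X (i+1) - X i)) with hT
  set F : ℝ → ℝ := fun s => ∑ i ∈ Finset.range n, T i s with hF
  have Tmono : ∀ i : ℕ, i < n → Monotone (fun s => T i s) := by
    intro i hi a b hab
    apply mul_le_mul_of_nonneg_left _ (sub_pos.2 (Ymono i (i+1) (Nat.lt_succ_self _) hi)).le
    have hd := dpos i hi
    exact clamp_mono (by gcongr <;> linarith)
  have Fmono : Monotone F := by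
    intro a b hab
    exact Finset.sum_le_sum fun i hi => Tmono i (Finset.mem_range.1 hi) hab
  have Fcont : Continuous F := by
    apply continuous_finset_sum
    intro i _
    exact continuous_const.mul (clamp_cont.comp ((continuous_id.sub continuous_const).div_const _))
  have Fval : ∀ j : ℕ, j ≤ n → F (X j) = Y j := by
    intro j hjn
    have h1 : ∀ i ∈ Finset.range n, i < j → T i (X j) = Y (i+1) - Y i := by
      intro i hi hij
      have hin := Finset.mem_range.1 hi
      rw [hT]
      simp only
      rw [clamp_of_one_le, mul_one]
      rw [le_div_iff₀ (dpos i hin)]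
      have : X (i+1) ≤ X j := Xmono' (i+1) j hij hjn
      linarith
    have h2 : ∀ i ∈ Finset.range n, j ≤ i → T i (X j) = 0 := by
      intro i hi hij
      have hin := Finset.mem_range.1 hi
      rw [hT]
      simp only
      rw [clamp_of_nonpos, mul_zero]
      apply div_nonpos_of_nonpos_of_nonneg _ (dpos i hin).le
      have : X j ≤ X i := Xmono' j i hij hin.le
      linarith
    have hsub : Finset.range j ⊆ Finset.range n := Finset.range_subset_range.2 hjn
    have : F (X j) = ∑ i ∈ Finset.range j, T i (X j) := by
      rw [hF]
      simp only
      rw [Finset.sum_subset hsub]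
      intro i hi hij
      exact h2 i hi (le_of_not_gt (fun hc => hij (Finset.mem_range.2 hc)))
    rw [this, Finset.sum_congr rfl (fun i hi => h1 i (hsub hi) (Finset.mem_range.1 hi)),
      Finset.sum_range_sub, hY0, sub_zero]
  have F0 : F 0 = 0 := by have h := Fval 0 (Nat.zero_le _); rwa [hX0, hY0] at h
  have F1 : F 1 = 1 := by have h := Fval n le_rfl; rwa [hXn, hYn] at h
  -- strict monotonicity on [0,1]
  have Fstrict : ∀ s t : ℝ, 0 ≤ s → s < t → t ≤ 1 → F s < F t := by
    intro s t hs hst ht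
    set i₀ := Nat.findGreatest (fun i => X i ≤ s) (n-1) with hi₀
    have hP0 : X 0 ≤ s := by rw [hX0]; exact hs
    have hi₀n : i₀ < n := lt_of_le_of_lt (Nat.findGreatest_le _) (by omega)
    have hXi₀ : X i₀ ≤ s := by
      have h := Nat.findGreatest_spec (P := fun i => X i ≤ s) (Nat.zero_le (n-1)) hP0
      exact h
    have hsX : s < X (i₀ + 1) := by
      by_cases h : i₀ + 1 ≤ n - 1
      · exact lt_of_not_ge (Nat.findGreatest_is_greatest (Nat.lt_succ_self _) h)
      · have : i₀ + 1 = n := by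
          have := Nat.findGreatest_le (P := fun i => X i ≤ s) (n-1)
          omega
        rw [this, hXn]
        exact lt_of_lt_of_le hst ht
    rw [hF]
    simp only
    apply Finset.sum_lt_sum
    · exact fun i hi => Tmono i (Finset.mem_range.1 hi) hst.le
    · refine ⟨i₀, Finset.mem_range.2 hi₀n, ?_⟩
      rw [hT]
      simp only
      have hd := dpos i₀ hi₀n
      apply mul_lt_mul_of_pos_left _ (sub_pos.2 (Ymono i₀ (i₀+1) (Nat.lt_succ_self _) hi₀n))
      set u := (s - X i₀) / (X (i₀+1) - X i₀) with hu
      set v := (t - X i₀) / (X (i₀+1) - X i₀) with hv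
      have hu0 : 0 ≤ u := div_nonneg (by linarith) hd.le
      have hu1 : u < 1 := (div_lt_one hd).2 (by linarith)
      have huv : u < v := by rw [hu, hv]; gcongr <;> linarith
      calc clamp u = u := clamp_of_mem hu0 hu1.le
      _ < min v 1 := lt_min huv hu1
      _ ≤ clamp v := le_max_right _ _
  refine ⟨fun t => t + (F (Int.fract t) - Int.fract t), ?_, ?_, ?_, ?_⟩
  · -- strict mono
    intro s t hst
    have es : s - Int.fract s = (⌊s⌋ : ℝ) := Int.self_sub_fract s
    have et : t - Int.fract t = (⌊t⌋ : ℝ) := Int.self_sub_fract t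
    have hfs0 := Int.fract_nonneg s
    have hft0 := Int.fract_nonneg t
    have hfs1 := Int.fract_lt_one s
    have hft1 := Int.fract_lt_one t
    rcases lt_or_eq_of_le (Int.floor_le_floor hst.le) with h|h
    · have h1 : F (Int.fract s) < 1 := by
        rw [← F1]; exact Fstrict _ _ hfs0 hfs1 le_rfl
      have h2 : 0 ≤ F (Int.fract t) := by
        rw [← F0]; exact Fmono hft0
      have h3 : (⌊s⌋ : ℝ) + 1 ≤ (⌊t⌋ : ℝ) := by exact_mod_cast h
      simp only
      linarith
    · have hff : Int.fract s < Int.fract t := by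
        rw [Int.fract, Int.fract, h]
        linarith
      have := Fstrict _ _ hfs0 hff hft1.le
      have h' : ((⌊s⌋:ℤ):ℝ) = ((⌊t⌋:ℤ):ℝ) := by exact_mod_cast h
      simp only
      linarith
  · -- continuity
    have h : ContinuousOn (fun s => F s - s) (Set.Icc (0:ℝ) 1) :=
      (Fcont.sub continuous_id).continuousOn
    have hf : F 0 - 0 = F 1 - 1 := by rw [F0, F1]; ring
    have := ContinuousOn.comp_fract'' h hf
    exact continuous_id.add this
  · -- periodicity
    intro t
    simp only
    rw [Int.fract_add_one]
    ring
  · -- values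
    intro i
    have hxi0 : 0 ≤ x i := by
      rw [← hx0]
      exact hx.monotone (by simp [Fin.le_def])
    have hfr : Int.fract (x i) = x i := Int.fract_eq_self.2 ⟨hxi0, hx1 i⟩
    simp only [hfr]
    have hXi : X i.val = x i := by
      simp only [hX, dif_pos i.isLt]
    have hYi : Y i.val = y i := by
      simp only [hY, dif_pos i.isLt]
    rw [← hXi, ← hYi] at *
    rw [Fval i.val i.isLt.le]
    ring

end Interp


section Comb
variable {H : Type*} {c : H → H → H → ℤ}

lemma c_swap12 (hzero : ∀ g₁ g₂ g₃ : H, c g₁ g₂ g₃ = 0 ↔ g₁ = g₂ ∨ g₁ = g₃ ∨ g₂ = g₃)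
    (hcoc : ∀ g₁ g₂ g₃ g₄ : H, c g₂ g₃ g₄ - c g₁ g₃ g₄ + c g₁ g₂ g₄ - c g₁ g₂ g₃ = 0)
    (a b d : H) : c b a d = -c a b d := by
  have h := hcoc a b a d
  have h1 : c a a d = 0 := (hzero _ _ _).2 (Or.inl rfl)
  have h2 : c a b a = 0 := (hzero _ _ _).2 (Or.inr (Or.inl rfl))
  linarith

lemma c_cyclic (hzero : ∀ g₁ g₂ g₃ : H, c g₁ g₂ g₃ = 0 ↔ g₁ = g₂ ∨ g₁ = g₃ ∨ g₂ = g₃)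
    (hcoc : ∀ g₁ g₂ g₃ g₄ : H, c g₂ g₃ g₄ - c g₁ g₃ g₄ + c g₁ g₂ g₄ - c g₁ g₂ g₃ = 0)
    (a b d : H) : c b d a = c a b d := by
  have h := hcoc a b d a
  have h1 : c a d a = 0 := (hzero _ _ _).2 (Or.inr (Or.inl rfl))
  have h2 : c a b a = 0 := (hzero _ _ _).2 (Or.inr (Or.inl rfl))
  linarith

lemma c_swap23 (hzero : ∀ g₁ g₂ g₃ : H, c g₁ g₂ g₃ = 0 ↔ g₁ = g₂ ∨ g₁ = g₃ ∨ g₂ = g₃)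
    (hcoc : ∀ g₁ g₂ g₃ g₄ : H, c g₂ g₃ g₄ - c g₁ g₃ g₄ + c g₁ g₂ g₄ - c g₁ g₂ g₃ = 0)
    (a b d : H) : c a d b = -c a b d := by
  rw [show c a d b = c b a d from c_cyclic hzero hcoc b a d, c_swap12 hzero hcoc a b d]

end Comb

/-- pure linear order trichotomy for cyclic patterns -/
lemma cyc_tri {α : Type*} [LinearOrder α] {a b d : α} (h1 : a ≠ b) (h2 : a ≠ d) (h3 : b ≠ d) :
    ((a < b ∧ b < d) ∨ (b < d ∧ d < a) ∨ (d < a ∧ a < b)) ∨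
    ((a < d ∧ d < b) ∨ (d < b ∧ b < a) ∨ (b < a ∧ a < d)) := by
  rcases lt_trichotomy a b with h|h|h <;> rcases lt_trichotomy b d with h'|h'|h' <;>
    rcases lt_trichotomy a d with h''|h''|h'' <;> tauto

lemma sbtw_div_of_cyc {n : ℕ} {i j k : Fin n}
    (h : (i < j ∧ j < k) ∨ (j < k ∧ k < i) ∨ (k < i ∧ i < j)) :
    sbtw ((((i:ℕ):ℝ)/n : ℝ) : S1) ((((j:ℕ):ℝ)/n : ℝ) : S1) ((((k:ℕ):ℝ)/n : ℝ) : S1) := by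
  have hn : 0 < n := i.pos
  have hn' : (0:ℝ) < n := by exact_mod_cast hn
  have hlt : ∀ u v : Fin n, u < v → ((u:ℕ):ℝ)/n < ((v:ℕ):ℝ)/n := by
    intro u v huv
    apply div_lt_div_of_pos_right ?_ hn'
    exact_mod_cast huv
  have hwrap : ∀ u v : Fin n, ((v:ℕ):ℝ)/n < ((u:ℕ):ℝ)/n + 1 := by
    intro u v
    rw [div_add' _ _ _ hn'.ne']
    apply div_lt_div_of_pos_right _ hn'
    have h1 : (v:ℕ) < n := v.isLt
    have h2 : (0:ℕ) ≤ (u:ℕ) := Nat.zero_le _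
    push_cast
    have : ((v:ℕ):ℝ) < n := by exact_mod_cast h1
    have : (0:ℝ) ≤ ((u:ℕ):ℝ) := by positivity
    linarith [show ((v:ℕ):ℝ) < (n:ℝ) from by exact_mod_cast h1]
  rcases h with ⟨h1, h2⟩ | ⟨h1, h2⟩ | ⟨h1, h2⟩
  · exact sbtw_of_lt (hlt _ _ h1) (hlt _ _ h2) (hwrap i k)
  · exact sbtw_cyclic_right (sbtw_of_lt (hlt _ _ h1) (hlt _ _ h2) (hwrap j i))
  · exact sbtw_cyclic_left (sbtw_of_lt (hlt _ _ h1) (hlt _ _ h2) (hwrap k j))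


section Main
variable {H : Type*} [Group H]

/-- over a linear order on ↥F compatible with c, the value of c on distinct triples is
determined by cyclic-increasing patterns. -/
lemma c_eq_one_iff_cyc {c : H → H → H → ℤ} (hc : IsCircularOrder c) (F : Finset H)
    [LinearOrder {x // x ∈ F}]
    (hkey : ∀ a b d : {x // x ∈ F}, a < b → b < d → c a b d = 1)
    (a b d : {x // x ∈ F}) (hab : a ≠ b) (had : a ≠ d) (hbd : b ≠ d) :
    (c a b d = 1 ↔ ((a < b ∧ b < d) ∨ (b < d ∧ d < a) ∨ (d < a ∧ a < b))) := by
  obtain ⟨hval, hzero, hcoc, _⟩ := hc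
  have hab' : (a:H) ≠ b := fun h => hab (Subtype.ext h)
  have had' : (a:H) ≠ d := fun h => had (Subtype.ext h)
  have hbd' : (b:H) ≠ d := fun h => hbd (Subtype.ext h)
  have cpos : ∀ x y z : {x // x ∈ F}, ((x < y ∧ y < z) ∨ (y < z ∧ z < x) ∨ (z < x ∧ x < y)) →
      c x y z = 1 := by
    intro x y z h
    rcases h with ⟨h1, h2⟩ | ⟨h1, h2⟩ | ⟨h1, h2⟩
    · exact hkey _ _ _ h1 h2
    · rw [← c_cyclic hzero hcoc (x:H) y z]
      exact hkey _ _ _ h1 h2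
    · rw [show c (x:H) y z = c (z:H) x y from c_cyclic hzero hcoc (z:H) x y]
      exact hkey _ _ _ h1 h2
  constructor
  · intro h1
    by_contra hcon
    have := (cyc_tri hab had hbd).resolve_left hcon
    have h2 : c (a:H) d b = 1 := cpos a d b this
    have h3 : c (a:H) b d = -1 := by
      have := c_swap23 hzero hcoc (a:H) b d
      omega
    omega
  · exact cpos a b d

lemma existence {c : H → H → H → ℤ} (hc : IsCircularOrder c) (F : Finset H) :
    ∃ ι : F → S1, Function.Injective ι ∧ RealizesOrder c F ι := by
  classical
  obtain ⟨hval, hzero, hcoc, hinvL⟩ := hc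
  rcases F.eq_empty_or_nonempty with rfl|⟨g₀, hg₀⟩
  · exact ⟨fun g => 0, fun a => absurd a.2 (Finset.notMem_empty _),
      fun a => absurd a.2 (Finset.notMem_empty _)⟩
  · set z₀ : {x // x ∈ F} := ⟨g₀, hg₀⟩ with hz₀
    set R : {x // x ∈ F} → {x // x ∈ F} → Prop :=
      fun a b => c g₀ a b = 1 ∨ ((a:H) = g₀ ∧ (b:H) ≠ g₀) with hR
    have Rirr : ∀ a, ¬ R a a := by
      rintro a (h | ⟨h1, h2⟩)
      · rw [(hzero _ _ _).2 (Or.inr (Or.inr rfl))] at h; omega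
      · exact h2 h1
    have Rtri : ∀ a b, a ≠ b → R a b ∨ R b a := by
      intro a b hab
      have hab' : (a:H) ≠ b := fun h => hab (Subtype.ext h)
      by_cases ha : (a:H) = g₀
      · exact Or.inl (Or.inr ⟨ha, fun h => hab' (ha.trans h.symm)⟩)
      by_cases hb : (b:H) = g₀
      · exact Or.inr (Or.inr ⟨hb, ha⟩)
      have hne : c g₀ (a:H) b ≠ 0 := by
        intro h0
        rcases (hzero _ _ _).1 h0 with h|h|h
        exacts [ha h.symm, hb h.symm, hab' h]
      rcases hval g₀ (a:H) b with h|h|h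
      · right; left
        have := c_swap23 hzero hcoc g₀ (a:H) b
        omega
      · exact absurd h hne
      · exact Or.inl (Or.inl h)
    have Rnz : ∀ a b : {x // x ∈ F}, R a b → (b:H) ≠ g₀ := by
      rintro a b (h | ⟨h1, h2⟩)
      · intro hb
        have h0 : c g₀ (a:H) (b:H) = 0 := (hzero _ _ _).2 (Or.inr (Or.inl hb.symm))
        omega
      · exact h2
    have Rz : ∀ a b : {x // x ∈ F}, R a b → (a:H) ≠ g₀ → c g₀ (a:H) b = 1 := by
      rintro a b (h | ⟨h1, h2⟩) ha
      · exact h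
      · exact absurd h1 ha
    have Rne : ∀ a b : {x // x ∈ F}, R a b → a ≠ b := by
      rintro a b h rfl; exact Rirr a h
    have Rtrans : ∀ a b d, R a b → R b d → R a d := by
      intro a b d h1 h2
      have hbz : (b:H) ≠ g₀ := Rnz _ _ h1
      have hdz : (d:H) ≠ g₀ := Rnz _ _ h2
      by_cases ha : (a:H) = g₀
      · exact Or.inr ⟨ha, hdz⟩
      · left
        have c1 : c g₀ (a:H) b = 1 := Rz _ _ h1 ha
        have c2 : c g₀ (b:H) d = 1 := Rz _ _ h2 hbz
        have hadne : (a:H) ≠ d := by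
          intro h
          have := c_swap23 hzero hcoc g₀ (b:H) d
          rw [← h] at c2
          have c3 : c g₀ (a:H) b = -1 := by
            have := c_swap23 hzero hcoc g₀ (a:H) b
            have h4 := c_cyclic hzero hcoc -- unused
            -- c g₀ b a = -c g₀ a b; and c g₀ b a = c2' with d = a
            omega
          omega
        have hvak := hval (a:H) b d
        have hcc := hcoc g₀ (a:H) b d
        have hvad := hval g₀ (a:H) d
        omega
    have key3 : ∀ a b d : {x // x ∈ F}, R a b → R b d → c (a:H) b d = 1 := by
      intro a b d h1 h2
      have hbz : (b:H) ≠ g₀ := Rnz _ _ h1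
      have hdz : (d:H) ≠ g₀ := Rnz _ _ h2
      by_cases ha : (a:H) = g₀
      · rw [ha]; exact Rz _ _ h2 hbz
      · have c1 : c g₀ (a:H) b = 1 := Rz _ _ h1 ha
        have c2 : c g₀ (b:H) d = 1 := Rz _ _ h2 hbz
        have c3 : c g₀ (a:H) d = 1 := Rz _ _ (Rtrans a b d h1 h2) ha
        have hcc := hcoc g₀ (a:H) b d
        omega
    letI : IsIrrefl {x // x ∈ F} R := ⟨Rirr⟩
    letI : IsTrans {x // x ∈ F} R := ⟨Rtrans⟩
    letI : IsTrichotomous {x // x ∈ F} R := ⟨by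
      intro a b hab hba
      by_contra h
      rcases Rtri a b h with h'|h'
      · exact hab h'
      · exact hba h'⟩
    letI : IsStrictOrder {x // x ∈ F} R := { }
    letI : IsStrictTotalOrder {x // x ∈ F} R := ⟨⟩
    letI : DecidableRel R := Classical.decRel _
    letI : LinearOrder {x // x ∈ F} := linearOrderOfSTO R
    have hlt : ∀ a b : {x // x ∈ F}, a < b ↔ R a b := fun _ _ => Iff.rfl
    have hkey : ∀ a b d : {x // x ∈ F}, a < b → b < d → c a b d = 1 := by
      intro a b d h1 h2
      exact key3 a b d ((hlt _ _).1 h1) ((hlt _ _).1 h2)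
    set n := F.card with hn
    have hcard : Fintype.card {x // x ∈ F} = n := Fintype.card_coe F
    set e := monoEquivOfFin {x // x ∈ F} hcard with he
    set ι : {x // x ∈ F} → S1 :=
      fun g => ((((e.symm g : Fin n) : ℕ) : ℝ) / n : ℝ) with hι
    have hmem : ∀ i : Fin n, ((i:ℕ):ℝ)/n ∈ Set.Ico (0:ℝ) (0 + 1) := by
      intro i
      have hn' : (0:ℝ) < n := by
        have : 0 < n := i.pos
        exact_mod_cast this
      constructor
      · positivity
      · rw [zero_add, div_lt_one hn']
        exact_mod_cast i.isLt
    have hinj : Function.Injective ι := by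
      intro a b h
      rw [hι] at h
      simp only at h
      rw [AddCircle.coe_eq_coe_iff_of_mem_Ico (hmem _) (hmem _)] at h
      have hn' : (0:ℝ) < n := by
        have : 0 < n := (e.symm a).pos
        exact_mod_cast this
      have : ((e.symm a : Fin n) : ℕ) = ((e.symm b : Fin n) : ℕ) := by
        field_simp at h
        exact_mod_cast h
      have : e.symm a = e.symm b := Fin.ext this
      exact e.symm.injective this
    refine ⟨ι, hinj, ?_⟩
    intro a b d hab had hbd
    have hiff := c_eq_one_iff_cyc ⟨hval, hzero, hcoc, hinvL⟩ F hkey a b d hab had hbd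
    rw [hiff]
    have htr : ∀ u v : {x // x ∈ F}, u < v ↔ e.symm u < e.symm v := by
      intro u v
      exact (OrderIso.lt_iff_lt e.symm).symm
    constructor
    · intro h
      apply sbtw_div_of_cyc
      rcases h with ⟨h1,h2⟩|⟨h1,h2⟩|⟨h1,h2⟩
      · exact Or.inl ⟨(htr _ _).1 h1, (htr _ _).1 h2⟩
      · exact Or.inr (Or.inl ⟨(htr _ _).1 h1, (htr _ _).1 h2⟩)
      · exact Or.inr (Or.inr ⟨(htr _ _).1 h1, (htr _ _).1 h2⟩)
    · intro h
      by_contra hcon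
      have h2 := (cyc_tri hab had hbd).resolve_left hcon
      have : sbtw (ι a) (ι d) (ι b) := by
        apply sbtw_div_of_cyc
        rcases h2 with ⟨h1',h2'⟩|⟨h1',h2'⟩|⟨h1',h2'⟩
        · exact Or.inl ⟨(htr _ _).1 h1', (htr _ _).1 h2'⟩
        · exact Or.inr (Or.inl ⟨(htr _ _).1 h1', (htr _ _).1 h2'⟩)
        · exact Or.inr (Or.inr ⟨(htr _ _).1 h1', (htr _ _).1 h2'⟩)
      exact not_sbtw_of_sbtw_rev this h
end Main

lemma op_comp {h₁ h₂ : S1 ≃ₜ S1} (H1 : OrientationPreserving h₁) (H2 : OrientationPreserving h₂) :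
    OrientationPreserving (h₁.trans h₂) := fun x y z h => H2 _ _ _ (H1 _ _ _ h)

lemma op_rot (t : S1) : OrientationPreserving (Homeomorph.addLeft t) :=
  fun x y z h => (sbtw_add_left t x y z).2 h

lemma uniqueness {H : Type*} [Group H] {c : H → H → H → ℤ} (hc : IsCircularOrder c) (F : Finset H)
    (ι ι' : F → S1) (hinj : Function.Injective ι) (hreal : RealizesOrder c F ι)
    (hinj' : Function.Injective ι') (hreal' : RealizesOrder c F ι') :
    ∃ h : S1 ≃ₜ S1, OrientationPreserving h ∧ ι' = ⇑h ∘ ι := by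
  classical
  rcases F.eq_empty_or_nonempty with rfl|⟨g₀, hg₀⟩
  · exact ⟨Homeomorph.refl S1, fun x y z h => h,
      funext fun g => absurd g.2 (Finset.notMem_empty _)⟩
  set z₀ : {x // x ∈ F} := ⟨g₀, hg₀⟩ with hz₀
  set a : {x // x ∈ F} → ℝ := fun g => ((AddCircle.equivIco 1 0 (ι g - ι z₀)) : ℝ) with haf
  set b : {x // x ∈ F} → ℝ := fun g => ((AddCircle.equivIco 1 0 (ι' g - ι' z₀)) : ℝ) with hbf
  have hmem : ∀ g, a g ∈ Set.Ico (0:ℝ) (0+1) := fun g => (AddCircle.equivIco 1 0 _).2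
  have hmem' : ∀ g, b g ∈ Set.Ico (0:ℝ) (0+1) := fun g => (AddCircle.equivIco 1 0 _).2
  have hcoe : ∀ g, ((a g : ℝ) : S1) = ι g - ι z₀ :=
    fun g => (AddCircle.equivIco 1 0).symm_apply_apply _
  have hcoe' : ∀ g, ((b g : ℝ) : S1) = ι' g - ι' z₀ :=
    fun g => (AddCircle.equivIco 1 0).symm_apply_apply _
  have h00 : ((0:ℝ) : S1) = (0 : S1) := rfl
  have haz : a z₀ = 0 := by
    have h1 : ((a z₀ : ℝ) : S1) = ((0:ℝ) : S1) := by rw [hcoe, sub_self, h00]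
    rw [AddCircle.coe_eq_coe_iff_of_mem_Ico (hmem _) (by constructor <;> norm_num)] at h1
    exact h1
  have hbz : b z₀ = 0 := by
    have h1 : ((b z₀ : ℝ) : S1) = ((0:ℝ) : S1) := by rw [hcoe', sub_self, h00]
    rw [AddCircle.coe_eq_coe_iff_of_mem_Ico (hmem' _) (by constructor <;> norm_num)] at h1
    exact h1
  have hainj : Function.Injective a := by
    intro g h hgh
    have : ((a g : ℝ) : S1) = ((a h : ℝ) : S1) := by rw [hgh]
    rw [hcoe, hcoe, sub_left_injective.eq_iff] at this
    exact hinj this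
  have hbinj : Function.Injective b := by
    intro g h hgh
    have : ((b g : ℝ) : S1) = ((b h : ℝ) : S1) := by rw [hgh]
    rw [hcoe', hcoe', sub_left_injective.eq_iff] at this
    exact hinj' this
  have hapos : ∀ g, g ≠ z₀ → 0 < a g := by
    intro g hg
    rcases lt_or_eq_of_le (hmem g).1 with h|h
    · exact h
    · exact absurd (hainj (haz.trans h)) (Ne.symm hg)
  have hbpos : ∀ g, g ≠ z₀ → 0 < b g := by
    intro g hg
    rcases lt_or_eq_of_le (hmem' g).1 with h|h
    · exact h
    · exact absurd (hbinj (hbz.trans h)) (Ne.symm hg)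
  -- the key comparison via sbtw at basepoint
  have hsb : ∀ (κ : {x // x ∈ F} → S1) (u : {x // x ∈ F} → ℝ),
      (∀ g, ((u g : ℝ) : S1) = κ g - κ z₀) → (∀ g, u g ∈ Set.Ico (0:ℝ) (0+1)) →
      (∀ g, g ≠ z₀ → 0 < u g) → Function.Injective u →
      ∀ g h : {x // x ∈ F}, g ≠ z₀ → h ≠ z₀ → g ≠ h →
      (u g < u h ↔ sbtw (κ z₀) (κ g) (κ h)) := by
    intro κ u hu hum hup huinj g h hg hh hgh
    have h1 : sbtw ((0:ℝ) : S1) ((u g : ℝ) : S1) ((u h : ℝ) : S1) ↔ u g < u h := by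
      apply sbtw_iff_reps
      · exact ⟨hup g hg, (hum g).2⟩
      · exact ⟨hup h hh, (hum h).2⟩
      · exact fun e => hgh (huinj e)
    rw [← h1, hu, hu, h00]
    have h2 := sbtw_add_left (κ z₀) (0 : S1) (κ g - κ z₀) (κ h - κ z₀)
    rw [add_zero, add_sub_cancel, add_sub_cancel] at h2
    exact h2.symm
  have hkey : ∀ g h : {x // x ∈ F}, a g < a h ↔ b g < b h := by
    intro g h
    rcases eq_or_ne g h with rfl|hgh
    · simp
    rcases eq_or_ne h z₀ with rfl|hh
    · constructor
      · intro h1; exact absurd (haz ▸ h1) (not_lt.2 (hmem g).1)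
      · intro h1; exact absurd (hbz ▸ h1) (not_lt.2 (hmem' g).1)
    rcases eq_or_ne g z₀ with rfl|hg
    · rw [haz, hbz]
      constructor
      · intro _; exact hbpos h hh
      · intro _; exact hapos h hh
    have hgz : g ≠ z₀ := hg
    have d1 : z₀ ≠ g := Ne.symm hg
    have d2 : z₀ ≠ h := Ne.symm hh
    rw [hsb ι a hcoe hmem hapos hainj g h hg hh hgh,
        hsb ι' b hcoe' hmem' hbpos hbinj g h hg hh hgh,
        ← hreal z₀ g h d1 d2 hgh, hreal' z₀ g h d1 d2 hgh]
  -- build linear order from a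
  letI : LinearOrder {x // x ∈ F} := LinearOrder.lift' a hainj
  have hlt : ∀ u v : {x // x ∈ F}, u < v ↔ a u < a v := fun _ _ => Iff.rfl
  set n := F.card with hn
  have hnpos : 0 < n := Finset.card_pos.2 ⟨g₀, hg₀⟩
  have hcard : Fintype.card {x // x ∈ F} = n := Fintype.card_coe F
  set e := monoEquivOfFin {x // x ∈ F} hcard with he
  set x : Fin n → ℝ := fun i => a (e i) with hx
  set y : Fin n → ℝ := fun i => b (e i) with hy
  have hxmono : StrictMono x := fun i j hij => (hlt _ _).1 (e.strictMono hij)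
  have hymono : StrictMono y := fun i j hij => (hkey _ _).1 ((hlt _ _).1 (e.strictMono hij))
  have he0 : e ⟨0, hnpos⟩ = z₀ := by
    by_contra hne
    have h1 : z₀ < e ⟨0, hnpos⟩ ∨ e ⟨0, hnpos⟩ < z₀ := by
      rcases lt_trichotomy (e ⟨0, hnpos⟩) z₀ with h|h|h
      · exact Or.inr h
      · exact absurd h hne
      · exact Or.inl h
    rcases h1 with h|h
    · have h2 := e.symm.strictMono h
      simp only [OrderIso.symm_apply_apply] at h2
      exact absurd h2 (by simp [Fin.lt_def])
    · have h3 : a (e ⟨0, hnpos⟩) < a z₀ := (hlt _ _).1 h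
      rw [haz] at h3
      exact absurd h3 (not_lt.2 (hmem _).1)
  have hx0 : x ⟨0, hnpos⟩ = 0 := by rw [hx]; simp only; rw [he0, haz]
  have hy0 : y ⟨0, hnpos⟩ = 0 := by rw [hy]; simp only; rw [he0, hbz]
  have hx1 : ∀ i, x i < 1 := fun i => by have := (hmem (e i)).2; rw [zero_add] at this; exact this
  have hy1 : ∀ i, y i < 1 := fun i => by have := (hmem' (e i)).2; rw [zero_add] at this; exact this
  obtain ⟨f, hmono, hcont, hper, hval⟩ := exists_interp n hnpos x y hxmono hymono hx0 hy0 hx1 hy1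
  set h₀ := circleHomeo hmono hcont hper with hh₀
  refine ⟨(Homeomorph.addLeft (-(ι z₀))).trans (h₀.trans (Homeomorph.addLeft (ι' z₀))), ?_, ?_⟩
  · exact op_comp (op_rot _) (op_comp (circleHomeo_op hmono hcont hper) (op_rot _))
  · funext g
    have step1 : (-(ι z₀)) + ι g = ((a g : ℝ) : S1) := by rw [hcoe, neg_add_eq_sub]
    have step2 : h₀ ((a g : ℝ) : S1) = ((b g : ℝ) : S1) := by
      rw [hh₀, circleHomeo_apply]
      have hag : a g = x (e.symm g) := by rw [hx]; simp only [e.apply_symm_apply]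
      have hbg : b g = y (e.symm g) := by rw [hy]; simp only [e.apply_symm_apply]
      rw [hag, hval, ← hbg]
    simp only [Function.comp_apply, Homeomorph.trans_apply, Homeomorph.coe_addLeft]
    rw [step1, step2, hcoe', add_sub_cancel]

/-- A circular order of `H` determines the configuration of any finite subset `F` of `H`:
a realizing injection `F → S¹` exists, and any two such differ by an
orientation-preserving homeomorphism of the circle. -/
theorem circular_order_determines_configuration
    {H : Type*} [Group H] (c : H → H → H → ℤ) (hc : IsCircularOrder c)
    (F : Finset H) :
    (∃ ι : F → S1, Function.Injective ι ∧ RealizesOrder c F ι) ∧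
    (∀ ι ι' : F → S1, Function.Injective ι → RealizesOrder c F ι →
      Function.Injective ι' → RealizesOrder c F ι' →
      ∃ h : S1 ≃ₜ S1, OrientationPreserving h ∧ ι' = ⇑h ∘ ι) := by
  exact ⟨existence hc F, fun ι ι' h1 h2 h3 h4 => uniqueness hc F ι ι' h1 h2 h3 h4⟩
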